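/- Let φ be an Orlicz function taking only finite values, satisfying the Δ₂-condition at zero, and such that ∑_{n=n₁}^∞ φ(1/n) < ∞ for some n₁ ∈ ℕ. Then for every sequence (x_n) of elements of ces_φ: ‖x_n‖_φ → 0 if and only if ρ_φ(x_n) → 0. -/

import Mathlib

open scoped ENNReal
open Filter

/-- An Orlicz function: `φ : ℝ → [0,∞]` even, convex, left continuous on `ℝ₊`,
continuous at zero, with `φ 0 = 0` and `φ u → ∞` as `u → ∞`. -/
structure OrliczFunction where
  toFun : ℝ → ℝ≥0∞
  even' : ∀ u : ℝ, toFun (-u) = toFun u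
  convex' : ∀ u v t : ℝ, 0 ≤ t → t ≤ 1 →
    toFun (t * u + (1 - t) * v) ≤ ENNReal.ofReal t * toFun u + ENNReal.ofReal (1 - t) * toFun v
  map_zero' : toFun 0 = 0
  leftContinuous' : ∀ t : ℝ, 0 < t → Tendsto toFun (nhdsWithin t (Set.Iio t)) (nhds (toFun t))
  continuousAtZero' : Tendsto toFun (nhds 0) (nhds 0)
  tendsto_top' : Tendsto toFun atTop (nhds ⊤)

/-- The Cesàro mean `σx(n) = (1/n) ∑_{j=1}^n |x j|` (with `0`-based indexing). -/
noncomputable def cesaroMean (x : ℕ → ℝ) (n : ℕ) : ℝ :=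
  (∑ j ∈ Finset.range (n + 1), |x j|) / (n + 1)

/-- The modular `ρ_φ(x) = ∑_i φ(σx(i))`. -/
noncomputable def rho (φ : OrliczFunction) (x : ℕ → ℝ) : ℝ≥0∞ :=
  ∑' n : ℕ, φ.toFun (cesaroMean x n)

/-- The Cesàro–Orlicz sequence space `ces_φ`. -/
def cesOrlicz (φ : OrliczFunction) : Set (ℕ → ℝ) :=
  {x | ∃ lam : ℝ, 0 < lam ∧ rho φ (fun i => lam * x i) < ⊤}

/-- The Luxemburg norm `‖x‖_φ = inf {λ > 0 : ρ_φ(x/λ) ≤ 1}`. -/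
noncomputable def luxNorm (φ : OrliczFunction) (x : ℕ → ℝ) : ℝ :=
  sInf {lam : ℝ | 0 < lam ∧ rho φ (fun i => x i / lam) ≤ 1}

/-- The subspace `A_φ` of `ces_φ`. -/
def Aphi (φ : OrliczFunction) : Set (ℕ → ℝ) :=
  {x | x ∈ cesOrlicz φ ∧ ∀ k : ℝ, 0 < k → ∃ nk : ℕ,
    ∑' n : ℕ, φ.toFun ((k / ((nk + n + 1 : ℕ) : ℝ)) * ∑ i ∈ Finset.range (nk + n + 1), |x i|) < ⊤}

/-- `∃ n₁, ∑_{n=n₁}^∞ φ(1/n) < ∞`. -/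
def TailFinite (φ : OrliczFunction) : Prop :=
  ∃ n₁ : ℕ, ∑' n : ℕ, φ.toFun (((n₁ + n + 1 : ℕ) : ℝ)⁻¹) < ⊤

/-- The `Δ₂`-condition at zero. -/
def Delta2Zero (φ : OrliczFunction) : Prop :=
  ∃ K : ℝ, 0 < K ∧ ∃ a : ℝ, 0 < a ∧ 0 < φ.toFun a ∧
    ∀ u : ℝ, 0 ≤ u → u ≤ a → φ.toFun (2 * u) ≤ ENNReal.ofReal K * φ.toFun u

/-- `φ` takes only finite values. -/
def FiniteValued (φ : OrliczFunction) : Prop := ∀ u : ℝ, φ.toFun u ≠ ⊤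

section AuxLemmas

lemma phi_scale (φ : OrliczFunction) {t : ℝ} (u : ℝ) (ht0 : 0 ≤ t) (ht1 : t ≤ 1) :
    φ.toFun (t * u) ≤ ENNReal.ofReal t * φ.toFun u := by
  have := φ.convex' u 0 t ht0 ht1
  simpa [φ.map_zero'] using this

lemma phi_mono (φ : OrliczFunction) {u v : ℝ} (hu : 0 ≤ u) (huv : u ≤ v) :
    φ.toFun u ≤ φ.toFun v := by
  rcases eq_or_lt_of_le (hu.trans huv) with hv | hv
  · have : u = 0 := le_antisymm (huv.trans hv.symm.le) hu
    rw [this, ← hv]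
  · have h1 : u = (u / v) * v := by field_simp
    calc φ.toFun u = φ.toFun ((u / v) * v) := by rw [← h1]
      _ ≤ ENNReal.ofReal (u / v) * φ.toFun v :=
          phi_scale φ v (div_nonneg hu hv.le) (div_le_one_of_le₀ huv hv.le)
      _ ≤ 1 * φ.toFun v := by
          gcongr
          exact ENNReal.ofReal_le_one.mpr (div_le_one_of_le₀ huv hv.le)
      _ = φ.toFun v := one_mul _

lemma cesaroMean_nonneg (x : ℕ → ℝ) (n : ℕ) : 0 ≤ cesaroMean x n :=
  div_nonneg (Finset.sum_nonneg fun _ _ => abs_nonneg _) (by positivity)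

lemma cesaroMean_smul (c : ℝ) (hc : 0 ≤ c) (x : ℕ → ℝ) (n : ℕ) :
    cesaroMean (fun i => c * x i) n = c * cesaroMean x n := by
  unfold cesaroMean
  rw [← mul_div_assoc, Finset.mul_sum]
  congr 1
  exact Finset.sum_congr rfl fun j _ => by simp [abs_mul, abs_of_nonneg hc]

lemma cesaroMean_div (x : ℕ → ℝ) {lam : ℝ} (hlam : 0 < lam) (n : ℕ) :
    cesaroMean (fun i => x i / lam) n = cesaroMean x n / lam := by
  have : (fun i => x i / lam) = fun i => lam⁻¹ * x i := by
    funext i; rw [inv_mul_eq_div]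
  rw [this, cesaroMean_smul _ (inv_nonneg.mpr hlam.le), inv_mul_eq_div]

lemma exists_rho_le_one (φ : OrliczFunction) {x : ℕ → ℝ} (hx : x ∈ cesOrlicz φ) :
    ∃ lam : ℝ, 0 < lam ∧ rho φ (fun i => x i / lam) ≤ 1 := by
  obtain ⟨c, hc, hfin⟩ := hx
  set s : ℕ → ℝ := cesaroMean (fun i => c * x i) with hs
  have hsnn : ∀ i, 0 ≤ s i := fun i => cesaroMean_nonneg _ i
  have key : Tendsto (fun k : ℕ => ∑' i : ℕ, φ.toFun (s i / (k + 1))) atTop (nhds 0) := by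
    have h := MeasureTheory.tendsto_lintegral_of_dominated_convergence
      (μ := MeasureTheory.Measure.count (α := ℕ))
      (F := fun k i => φ.toFun (s i / (k + 1))) (f := fun _ => 0)
      (fun i => φ.toFun (s i)) (fun k => measurable_of_countable _)
      (fun k => Filter.Eventually.of_forall fun i => by
        refine phi_mono φ (div_nonneg (hsnn i) (by positivity)) ?_
        exact div_le_self (hsnn i) (by linarith [Nat.cast_nonneg (α := ℝ) k]))
      ?_ ?_
    · simpa [MeasureTheory.lintegral_count] using h
    · rw [MeasureTheory.lintegral_count]
      exact hfin.ne
    · refine Filter.Eventually.of_forall fun i => ?_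
      have h1 : Tendsto (fun k : ℕ => s i / (k + 1)) atTop (nhds 0) := by
        have := tendsto_const_div_atTop_nhds_zero_nat (s i)
        refine (this.comp (tendsto_add_atTop_nat 1)).congr (fun k => ?_)
        simp [Function.comp, div_eq_mul_inv]
      exact φ.continuousAtZero'.comp h1
  obtain ⟨k, hk⟩ := (ENNReal.tendsto_nhds_zero.mp key 1 (by norm_num)).exists
  refine ⟨(k + 1) / c, by positivity, ?_⟩
  have heq : (fun i => x i / ((k + 1 : ℝ) / c)) = fun i => (c * x i) / (k + 1 : ℝ) := by
    funext i; field_simp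
  rw [rho]
  calc ∑' n, φ.toFun (cesaroMean (fun i => x i / ((k + 1 : ℝ) / c)) n)
      = ∑' n, φ.toFun (s n / (k + 1)) := by
        refine tsum_congr fun n => ?_
        rw [heq, cesaroMean_div _ (by positivity) n]
    _ ≤ 1 := hk

lemma rho_le_of_div_le_one (φ : OrliczFunction) (x : ℕ → ℝ) {lam : ℝ} (h0 : 0 < lam)
    (h1 : lam ≤ 1) (hr : rho φ (fun i => x i / lam) ≤ 1) :
    rho φ x ≤ ENNReal.ofReal lam := by
  have key : ∀ n, φ.toFun (cesaroMean x n) ≤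
      ENNReal.ofReal lam * φ.toFun (cesaroMean (fun i => x i / lam) n) := by
    intro n
    rw [cesaroMean_div _ h0]
    have : cesaroMean x n = lam * (cesaroMean x n / lam) := by field_simp
    calc φ.toFun (cesaroMean x n) = φ.toFun (lam * (cesaroMean x n / lam)) := by rw [← this]
      _ ≤ ENNReal.ofReal lam * φ.toFun (cesaroMean x n / lam) := phi_scale φ _ h0.le h1
  calc rho φ x ≤ ∑' n, ENNReal.ofReal lam * φ.toFun (cesaroMean (fun i => x i / lam) n) :=
        ENNReal.tsum_le_tsum key
    _ = ENNReal.ofReal lam * rho φ (fun i => x i / lam) := ENNReal.tsum_mul_left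
    _ ≤ ENNReal.ofReal lam * 1 := by gcongr
    _ = ENNReal.ofReal lam := mul_one _

lemma delta2_pow (φ : OrliczFunction) {K a : ℝ} (hK : 0 ≤ K) (ha : 0 < a)
    (hΔ : ∀ u : ℝ, 0 ≤ u → u ≤ a → φ.toFun (2 * u) ≤ ENNReal.ofReal K * φ.toFun u) :
    ∀ m : ℕ, ∀ u : ℝ, 0 ≤ u → 2 ^ m * u ≤ 2 * a →
      φ.toFun (2 ^ m * u) ≤ ENNReal.ofReal (K ^ m) * φ.toFun u := by
  intro m
  induction m with
  | zero => intro u hu _; simp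
  | succ m ih =>
    intro u hu hle
    have h2m : (0:ℝ) < 2 ^ m := by positivity
    have hmu : 2 ^ m * u ≤ a := by
      have : 2 * (2 ^ m * u) ≤ 2 * a := by
        calc 2 * (2 ^ m * u) = 2 ^ (m + 1) * u := by ring
          _ ≤ 2 * a := hle
      linarith
    have h1 : φ.toFun (2 ^ (m + 1) * u) = φ.toFun (2 * (2 ^ m * u)) := by ring_nf
    calc φ.toFun (2 ^ (m + 1) * u) = φ.toFun (2 * (2 ^ m * u)) := h1
      _ ≤ ENNReal.ofReal K * φ.toFun (2 ^ m * u) :=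
          hΔ _ (by positivity) hmu
      _ ≤ ENNReal.ofReal K * (ENNReal.ofReal (K ^ m) * φ.toFun u) := by
          gcongr
          exact ih u hu (le_trans hmu (by linarith))
      _ = ENNReal.ofReal (K ^ (m + 1)) * φ.toFun u := by
          rw [← mul_assoc, ← ENNReal.ofReal_mul hK, pow_succ, mul_comm (K ^ m) K]

lemma phi_pos (φ : OrliczFunction) {K a : ℝ} (ha : 0 < a) (hpa : 0 < φ.toFun a)
    (hΔ : ∀ u : ℝ, 0 ≤ u → u ≤ a → φ.toFun (2 * u) ≤ ENNReal.ofReal K * φ.toFun u)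
    {b : ℝ} (hb : 0 < b) (hba : b ≤ a) : 0 < φ.toFun b := by
  by_contra h
  push_neg at h
  have hφb : φ.toFun b = 0 := le_antisymm h zero_le
  have key : ∀ j : ℕ, 2 ^ j * b ≤ a → φ.toFun (2 ^ j * b) = 0 := by
    intro j
    induction j with
    | zero => intro _; simpa using hφb
    | succ j ih =>
      intro hj
      have hjb : 2 ^ j * b ≤ a := by
        have e : (2:ℝ) ^ (j + 1) * b = 2 * (2 ^ j * b) := by ring
        have hp : 0 < (2:ℝ) ^ j * b := mul_pos (pow_pos two_pos j) hb
        rw [e] at hj; linarith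
      have h1 : φ.toFun (2 ^ (j + 1) * b) = φ.toFun (2 * (2 ^ j * b)) := by ring_nf
      have h2 := hΔ (2 ^ j * b) (by positivity) hjb
      rw [ih hjb, mul_zero] at h2
      exact le_antisymm (h1 ▸ h2) zero_le
  have hP : ∃ m : ℕ, a < 2 ^ m * b := by
    obtain ⟨m, hm⟩ := pow_unbounded_of_one_lt (a / b) (show (1:ℝ) < 2 by norm_num)
    exact ⟨m, by rw [div_lt_iff₀ hb] at hm; linarith⟩
  classical
  let m₀ := Nat.find hP
  have hm₀ : a < 2 ^ m₀ * b := Nat.find_spec hP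
  have hm₀pos : m₀ ≠ 0 := by
    intro h0
    have := h0 ▸ hm₀
    simp at this
    linarith
  have hprev : ¬ a < 2 ^ (m₀ - 1) * b := Nat.find_min hP (Nat.sub_lt (Nat.pos_of_ne_zero hm₀pos) one_pos)
  push_neg at hprev
  have hz : φ.toFun (2 ^ (m₀ - 1) * b) = 0 := key _ hprev
  have h2 := hΔ (2 ^ (m₀ - 1) * b) (by positivity) hprev
  rw [hz, mul_zero] at h2
  have hrw : 2 * (2 ^ (m₀ - 1) * b) = 2 ^ m₀ * b := by
    rw [← mul_assoc, ← pow_succ']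
    congr 2
    omega
  rw [hrw] at h2
  have : φ.toFun a ≤ φ.toFun (2 ^ m₀ * b) := phi_mono φ ha.le hm₀.le
  rw [le_antisymm h2 zero_le] at this
  simp at this
  exact hpa.ne' this

lemma luxNorm_le_of_rho_small (φ : OrliczFunction) (hfin : ∀ u : ℝ, φ.toFun u ≠ ⊤)
    {K a : ℝ} (hK : 0 < K) (ha : 0 < a) (hpa : 0 < φ.toFun a)
    (hΔ : ∀ u : ℝ, 0 ≤ u → u ≤ a → φ.toFun (2 * u) ≤ ENNReal.ofReal K * φ.toFun u)
    {ε : ℝ} (hε : 0 < ε) :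
    ∃ δ : ℝ≥0∞, 0 < δ ∧ ∀ x : ℕ → ℝ, rho φ x ≤ δ → luxNorm φ x ≤ ε := by
  set K' := max K 1 with hK'
  have hK'1 : (1:ℝ) ≤ K' := le_max_right _ _
  have hΔ' : ∀ u : ℝ, 0 ≤ u → u ≤ a → φ.toFun (2 * u) ≤ ENNReal.ofReal K' * φ.toFun u :=
    fun u hu hua => (hΔ u hu hua).trans (by gcongr; exact le_max_left _ _)
  obtain ⟨m', hm'⟩ := pow_unbounded_of_one_lt (1 / ε) (show (1:ℝ) < 2 by norm_num)
  set m := m' + 1 with hmdef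
  have hm : 1 / ε ≤ 2 ^ m := hm'.le.trans (by
    have : (2:ℝ) ^ m' ≤ 2 ^ m := pow_le_pow_right₀ one_le_two (Nat.le_succ m')
    exact this)
  have h2m : (0:ℝ) < 2 ^ m := by positivity
  set b := 2 * a / 2 ^ m with hbdef
  have hb : 0 < b := by positivity
  have hba : b ≤ a := by
    rw [hbdef, div_le_iff₀ h2m]
    have : (2:ℝ) ≤ 2 ^ m := by
      calc (2:ℝ) = 2 ^ 1 := (pow_one 2).symm
        _ ≤ 2 ^ m := pow_le_pow_right₀ one_le_two (by omega)
    nlinarith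
  have hφb : 0 < φ.toFun b := phi_pos φ ha hpa hΔ hb hba
  have h2mb : 2 ^ m * b = 2 * a := by
    rw [hbdef]; field_simp
  set δ := min (φ.toFun b / 2) (ENNReal.ofReal (K' ^ m))⁻¹ with hδdef
  have hδpos : 0 < δ := by
    refine lt_min ?_ ?_
    · exact ENNReal.half_pos hφb.ne'
    · exact ENNReal.inv_pos.mpr ENNReal.ofReal_ne_top
  refine ⟨δ, hδpos, fun x hx => ?_⟩
  have hσb : ∀ n : ℕ, cesaroMean x n ≤ b := by
    intro n
    by_contra hcon
    push_neg at hcon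
    have h1 : φ.toFun b ≤ φ.toFun (cesaroMean x n) := phi_mono φ hb.le hcon.le
    have h2 : φ.toFun (cesaroMean x n) ≤ δ := le_trans (ENNReal.le_tsum n) hx
    have hlt : δ < φ.toFun b :=
      lt_of_le_of_lt (min_le_left _ _) (ENNReal.half_lt_self hφb.ne' (hfin b))
    exact absurd (h1.trans h2) (not_le.mpr hlt)
  have hr : rho φ (fun i => x i / ε) ≤ 1 := by
    have hKm0 : (0:ℝ) < K' ^ m := by positivity
    calc rho φ (fun i => x i / ε) = ∑' n, φ.toFun (cesaroMean x n / ε) :=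
          tsum_congr fun n => by rw [cesaroMean_div _ hε]
      _ ≤ ∑' n, ENNReal.ofReal (K' ^ m) * φ.toFun (cesaroMean x n) := by
          refine ENNReal.tsum_le_tsum fun n => ?_
          have hσn := cesaroMean_nonneg x n
          have h1 : cesaroMean x n / ε ≤ 2 ^ m * cesaroMean x n := by
            rw [div_eq_mul_inv, ← one_div]
            calc cesaroMean x n * (1 / ε) ≤ cesaroMean x n * 2 ^ m :=
                  mul_le_mul_of_nonneg_left hm hσn
              _ = 2 ^ m * cesaroMean x n := mul_comm _ _
          calc φ.toFun (cesaroMean x n / ε) ≤ φ.toFun (2 ^ m * cesaroMean x n) :=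
                phi_mono φ (div_nonneg hσn hε.le) h1
            _ ≤ ENNReal.ofReal (K' ^ m) * φ.toFun (cesaroMean x n) := by
                refine delta2_pow φ (le_trans zero_le_one hK'1) ha hΔ' m _ hσn ?_
                calc 2 ^ m * cesaroMean x n ≤ 2 ^ m * b := by
                      exact mul_le_mul_of_nonneg_left (hσb n) h2m.le
                  _ = 2 * a := h2mb
      _ = ENNReal.ofReal (K' ^ m) * rho φ x := ENNReal.tsum_mul_left
      _ ≤ ENNReal.ofReal (K' ^ m) * (ENNReal.ofReal (K' ^ m))⁻¹ := by
          gcongr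
          exact hx.trans (min_le_right _ _)
      _ = 1 := ENNReal.mul_inv_cancel (ENNReal.ofReal_pos.mpr hKm0).ne' ENNReal.ofReal_ne_top
  exact csInf_le ⟨0, fun y hy => hy.1.le⟩ ⟨hε, hr⟩

end AuxLemmas

/-- if `φ ∈ Δ₂(0)` then `‖x_n‖_φ → 0 ↔ ρ_φ(x_n) → 0`. -/
theorem stmt_10 (φ : OrliczFunction) (hfin : FiniteValued φ) (hδ : Delta2Zero φ)
    (htail : TailFinite φ) (xs : ℕ → ℕ → ℝ) (hmem : ∀ n, xs n ∈ cesOrlicz φ) :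
    Tendsto (fun n => luxNorm φ (xs n)) atTop (nhds 0) ↔
      Tendsto (fun n => rho φ (xs n)) atTop (nhds 0) := by
  obtain ⟨K, hK, a, ha, hpa, hΔ⟩ := hδ
  constructor
  · intro h
    rw [ENNReal.tendsto_nhds_zero]
    intro ε hε
    set c := min ε 1 with hc
    have hcne : c ≠ ⊤ := ((min_le_right ε 1).trans_lt (by norm_num)).ne
    set r := c.toReal with hr
    have hrpos : 0 < r := ENNReal.toReal_pos (lt_min hε (by norm_num)).ne' hcne
    have hr1 : r ≤ 1 := by
      calc c.toReal ≤ (1 : ℝ≥0∞).toReal := ENNReal.toReal_mono (by norm_num) (min_le_right _ _)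
        _ = 1 := by simp
    filter_upwards [h.eventually (gt_mem_nhds hrpos)] with n hn
    have hne : {lam : ℝ | 0 < lam ∧ rho φ (fun i => xs n i / lam) ≤ 1}.Nonempty := by
      obtain ⟨lam, h1, h2⟩ := exists_rho_le_one φ (hmem n)
      exact ⟨lam, h1, h2⟩
    have hbdd : BddBelow {lam : ℝ | 0 < lam ∧ rho φ (fun i => xs n i / lam) ≤ 1} :=
      ⟨0, fun y hy => hy.1.le⟩
    rw [luxNorm] at hn
    obtain ⟨lam, ⟨hlam0, hlam1⟩, hlamr⟩ := (csInf_lt_iff hbdd hne).mp hn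
    calc rho φ (xs n) ≤ ENNReal.ofReal lam :=
          rho_le_of_div_le_one φ _ hlam0 (hlamr.le.trans hr1) hlam1
      _ ≤ ENNReal.ofReal r := ENNReal.ofReal_le_ofReal hlamr.le
      _ = c := ENNReal.ofReal_toReal hcne
      _ ≤ ε := min_le_left _ _
  · intro h
    rw [NormedAddCommGroup.tendsto_nhds_zero]
    intro ε hε
    obtain ⟨δ, hδpos, hδ'⟩ := luxNorm_le_of_rho_small φ hfin hK ha hpa hΔ (half_pos hε)
    filter_upwards [ENNReal.tendsto_nhds_zero.mp h δ hδpos] with n hn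
    have h1 : luxNorm φ (xs n) ≤ ε / 2 := hδ' _ hn
    have h0 : 0 ≤ luxNorm φ (xs n) :=
      Real.sInf_nonneg (fun y hy => hy.1.le)
    rw [Real.norm_eq_abs, abs_of_nonneg h0]
    linarith
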